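/- For every h, φ ∈ 𝓢(ℝⁿ), the function y ↦ ∫_{ℝⁿ} 1_{ℝⁿ₊}(x)·h(x)·φ(x − y) dx belongs to 𝓢(ℝⁿ). If moreover supp φ ⊆ {x ∈ ℝⁿ : xₙ ≤ 0}, then this function vanishes at every y with yₙ ≤ 0, hence is supported in the closed half-space {y : yₙ ≥ 0}. -/

import Mathlib

open MeasureTheory Filter Topology Real

section Helpers

variable {E F G : Type*} [NormedAddCommGroup E] [NormedSpace ℝ E]
  [NormedAddCommGroup F] [NormedSpace ℝ F] [NormedAddCommGroup G] [NormedSpace ℝ G]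

/-- Postcomposition of a Schwartz function with a continuous linear map. -/
noncomputable def SchwartzMap.compCLMcod (σ : F →L[ℝ] G) (f : SchwartzMap E F) :
    SchwartzMap E G where
  toFun := fun x => σ (f x)
  smooth' := σ.contDiff.comp (f.smooth ⊤)
  decay' := by
    intro k m
    obtain ⟨C, hC⟩ := f.decay' k m
    refine ⟨‖σ‖ * C, fun x => ?_⟩
    have h1 : iteratedFDeriv ℝ m (fun x => σ (f x)) x
        = σ.compContinuousMultilinearMap (iteratedFDeriv ℝ m (⇑f) x) :=
      σ.iteratedFDeriv_comp_left (f.smooth ⊤).contDiffAt (by exact_mod_cast le_top)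
    rw [h1]
    calc ‖x‖ ^ k * ‖σ.compContinuousMultilinearMap (iteratedFDeriv ℝ m (⇑f) x)‖
        ≤ ‖x‖ ^ k * (‖σ‖ * ‖iteratedFDeriv ℝ m (⇑f) x‖) := by
          gcongr; exact σ.norm_compContinuousMultilinearMap_le _
      _ = ‖σ‖ * (‖x‖ ^ k * ‖iteratedFDeriv ℝ m (⇑f) x‖) := by ring
      _ ≤ ‖σ‖ * C := mul_le_mul_of_nonneg_left (hC x) (norm_nonneg σ)

@[simp] lemma SchwartzMap.compCLMcod_apply (σ : F →L[ℝ] G) (f : SchwartzMap E F) (x : E) :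
    f.compCLMcod σ x = σ (f x) := rfl

variable {V : Type*} [NormedAddCommGroup V] [InnerProductSpace ℝ V] [FiniteDimensional ℝ V]
  [MeasurableSpace V] [BorelSpace V]

lemma hasTemperateGrowth_fourierIntegral {c : V → ℂ}
    (hmeas : AEStronglyMeasurable c (volume : Measure V))
    (hint : ∀ k : ℕ, Integrable (fun v : V => ‖v‖ ^ k * ‖c v‖)) :
    Function.HasTemperateGrowth (FourierTransform.fourier c) := by
  have hf : ∀ (k : ℕ), (k : ℕ∞) ≤ (⊤ : ℕ∞) → Integrable (fun v : V => ‖v‖ ^ k * ‖c v‖) :=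
    fun k _ => hint k
  constructor
  · exact Real.contDiff_fourier hf
  · intro N
    refine ⟨0, (2 * π * ‖innerSL (E := V) ℝ‖) ^ N * ∫ v : V, ‖v‖ ^ N * ‖c v‖, fun w => ?_⟩
    rw [Real.iteratedFDeriv_fourier (N := ⊤) hf hmeas le_top]
    simp only [pow_zero, mul_one]
    calc ‖FourierTransform.fourier (fun v => VectorFourier.fourierPowSMulRight (innerSL ℝ) c v N) w‖
        ≤ ∫ v : V, ‖VectorFourier.fourierPowSMulRight (innerSL ℝ) c v N‖ :=
          VectorFourier.norm_fourierIntegral_le_integral_norm _ _ _ _ _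
      _ ≤ ∫ v : V, (2 * π * ‖innerSL (E := V) ℝ‖) ^ N * (‖v‖ ^ N * ‖c v‖) := by
          apply integral_mono_of_nonneg
          · exact Eventually.of_forall fun v => norm_nonneg _
          · exact (hint N).const_mul _
          · exact Eventually.of_forall fun v => by
              simpa [mul_assoc] using
                VectorFourier.norm_fourierPowSMulRight_le (innerSL ℝ) c v N
      _ = (2 * π * ‖innerSL (E := V) ℝ‖) ^ N * ∫ v : V, ‖v‖ ^ N * ‖c v‖ := by
          rw [integral_const_mul]

lemma key_identity (c : V → ℂ) (hc : Integrable c) (w : SchwartzMap V ℂ) (y : V) :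
    FourierTransform.fourierInv (fun ξ => w ξ * FourierTransform.fourier c ξ) y
      = ∫ x : V, c x * FourierTransform.fourier (⇑w) (x - y) := by
  have he : Continuous (Real.fourierChar : AddChar ℝ Circle) := Real.continuous_fourierChar
  have hL : Continuous fun p : V × V => (innerₗ V) p.1 p.2 := continuous_inner
  set ψ : V → ℂ := fun ξ => Real.fourierChar (inner ℝ ξ y : ℝ) • w ξ with hψ
  have hψ_int : Integrable ψ := by
    have := (VectorFourier.fourierIntegral_convergent_iff (f := ⇑w) (μ := volume)
      he hL (-y)).2 w.integrable
    apply this.congr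
    refine Eventually.of_forall fun ξ => ?_
    simp [ψ, innerₗ_apply_apply, inner_neg_right]
  have step1 : FourierTransform.fourierInv (fun ξ => w ξ * FourierTransform.fourier c ξ) y
      = ∫ ξ : V, (ContinuousLinearMap.mul ℂ ℂ)
          (VectorFourier.fourierIntegral Real.fourierChar volume (innerₗ V) c ξ) (ψ ξ) := by
    rw [Real.fourierInv_eq]
    congr 1
    ext ξ
    simp only [ContinuousLinearMap.mul_apply', ψ]
    rw [Circle.smul_def, Circle.smul_def]
    show (Real.fourierChar (inner ℝ ξ y : ℝ) : ℂ) * (w ξ * FourierTransform.fourier c ξ)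
      = FourierTransform.fourier c ξ * ((Real.fourierChar (inner ℝ ξ y : ℝ) : ℂ) * w ξ)
    ring
  rw [step1,
    VectorFourier.integral_bilin_fourierIntegral_eq_flip (ContinuousLinearMap.mul ℂ ℂ) he hL hc
      hψ_int]
  congr 1
  ext x
  have step2 : VectorFourier.fourierIntegral Real.fourierChar volume (innerₗ V).flip ψ x
      = FourierTransform.fourier (⇑w) (x - y) := by
    rw [flip_innerₗ]
    rw [Real.fourier_eq]
    show (∫ ξ : V, Real.fourierChar (-(innerₗ V) ξ x) • ψ ξ) = _
    congr 1
    ext ξ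
    simp only [ψ, innerₗ_apply_apply, ← Submonoid.smul_def, smul_smul, ← AddChar.map_add_eq_mul]
    congr 2
    rw [inner_sub_right]
    ring
  rw [step2]
  rfl

end Helpers

set_option maxHeartbeats 2000000 in
theorem halfspace_convolution_schwartz (n : ℕ)
    (h φ : SchwartzMap (Fin (n+1) → ℝ) ℝ) :
    ∃ g : SchwartzMap (Fin (n+1) → ℝ) ℝ,
      (∀ y : Fin (n+1) → ℝ,
        g y = ∫ x in {x : Fin (n+1) → ℝ | 0 < x (Fin.last n)}, h x * φ (x - y)) ∧
      (tsupport ⇑φ ⊆ {x : Fin (n+1) → ℝ | x (Fin.last n) ≤ 0} →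
        (∀ y : Fin (n+1) → ℝ, y (Fin.last n) ≤ 0 → g y = 0) ∧
        tsupport ⇑g ⊆ {y : Fin (n+1) → ℝ | 0 ≤ y (Fin.last n)}) := by
  classical
  let eqv : (EuclideanSpace ℝ (Fin (n+1))) ≃L[ℝ] (Fin (n+1) → ℝ) := EuclideanSpace.equiv (Fin (n+1)) ℝ
  -- Schwartz functions transported to `(EuclideanSpace ℝ (Fin (n+1)))`
  let hV : SchwartzMap (EuclideanSpace ℝ (Fin (n+1))) ℝ := SchwartzMap.compCLMOfContinuousLinearEquiv ℝ eqv h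
  let φV : SchwartzMap (EuclideanSpace ℝ (Fin (n+1))) ℝ := SchwartzMap.compCLMOfContinuousLinearEquiv ℝ eqv φ
  let φneg : SchwartzMap (EuclideanSpace ℝ (Fin (n+1))) ℝ :=
    SchwartzMap.compCLMOfContinuousLinearEquiv ℝ (ContinuousLinearEquiv.neg ℝ (M := (EuclideanSpace ℝ (Fin (n+1))))) φV
  let φt : SchwartzMap (EuclideanSpace ℝ (Fin (n+1))) ℂ := φneg.compCLMcod Complex.ofRealCLM
  have hφt_apply : ∀ z : (EuclideanSpace ℝ (Fin (n+1))), φt z = (φV (-z) : ℂ) := fun z => rfl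
  -- the truncated function c
  let S : Set (EuclideanSpace ℝ (Fin (n+1))) := {x : (EuclideanSpace ℝ (Fin (n+1))) | 0 < x (Fin.last n)}
  have hS_meas : MeasurableSet S := by
    have : Measurable fun x : (EuclideanSpace ℝ (Fin (n+1))) => x (Fin.last n) :=
      (continuous_apply (Fin.last n)).measurable.comp
        (MeasurableEquiv.toLp 2 (Fin (n+1) → ℝ)).symm.measurable
    exact measurableSet_lt measurable_const this
  let c : (EuclideanSpace ℝ (Fin (n+1))) → ℂ := S.indicator fun x => (hV x : ℂ)
  have hc_meas : AEStronglyMeasurable c (volume : Measure (EuclideanSpace ℝ (Fin (n+1)))) :=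
    (AEStronglyMeasurable.indicator
      ((Complex.continuous_ofReal.comp hV.continuous).aestronglyMeasurable) hS_meas)
  have hc_int_pow : ∀ k : ℕ, Integrable (fun v : (EuclideanSpace ℝ (Fin (n+1))) => ‖v‖ ^ k * ‖c v‖) := by
    intro k
    apply (hV.integrable_pow_mul (volume : Measure (EuclideanSpace ℝ (Fin (n+1)))) k).mono'
    · exact ((continuous_norm.pow k).aestronglyMeasurable.mul hc_meas.norm)
    · refine Eventually.of_forall fun v => ?_
      have h1 : ‖c v‖ ≤ ‖(hV v : ℂ)‖ := norm_indicator_le_norm_self _ v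
      have h2 : ‖(hV v : ℂ)‖ = ‖hV v‖ := Complex.norm_real _
      rw [Real.norm_eq_abs, abs_of_nonneg (by positivity)]
      have h3 : ‖c v‖ ≤ ‖hV v‖ := h2 ▸ h1
      exact mul_le_mul_of_nonneg_left h3 (by positivity)
  have hc_int : Integrable c := by
    rw [← integrable_norm_iff hc_meas]
    simpa using hc_int_pow 0
  -- the Fourier transform of c has temperate growth
  have hFc : Function.HasTemperateGrowth (FourierTransform.fourier c) :=
    hasTemperateGrowth_fourierIntegral hc_meas hc_int_pow
  -- the convolution as a Schwartz function on (EuclideanSpace ℝ (Fin (n+1)))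
  let w : SchwartzMap (EuclideanSpace ℝ (Fin (n+1))) ℂ := SchwartzMap.fourierTransformCLM ℂ φt
  let G : SchwartzMap (EuclideanSpace ℝ (Fin (n+1))) ℂ := SchwartzMap.bilinLeftCLM (ContinuousLinearMap.mul ℝ ℂ) hFc w
  let gV : SchwartzMap (EuclideanSpace ℝ (Fin (n+1))) ℂ := (SchwartzMap.fourierTransformCLE ℂ (SchwartzMap (EuclideanSpace ℝ (Fin (n+1))) ℂ)).symm G
  have hw_coe : ⇑w = FourierTransform.fourier ⇑φt := rfl
  have hG_coe : ⇑G = fun ξ => w ξ * FourierTransform.fourier c ξ := rfl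
  have hFw : ∀ z : (EuclideanSpace ℝ (Fin (n+1))), FourierTransform.fourier (⇑w) z = (φV z : ℂ) := by
    intro z
    have inv : FourierTransform.fourierInv (FourierTransform.fourier ⇑φt) = ⇑φt :=
      φt.continuous.fourierInv_fourier_eq φt.integrable
        (SchwartzMap.fourierTransformCLM ℂ φt).integrable
    calc FourierTransform.fourier (⇑w) z
        = FourierTransform.fourierInv (FourierTransform.fourier ⇑φt) (-z) := by
          rw [hw_coe, Real.fourierInv_eq_fourier_neg, neg_neg]
      _ = φt (-z) := by rw [inv]
      _ = (φV z : ℂ) := by rw [hφt_apply, neg_neg]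
  have hgV : ∀ y : (EuclideanSpace ℝ (Fin (n+1))), gV y = ∫ x : (EuclideanSpace ℝ (Fin (n+1))), c x * (φV (x - y) : ℂ) := by
    intro y
    have e1 : ⇑gV = FourierTransform.fourierInv (⇑G) :=
      SchwartzMap.fourierInv_coe G
    rw [show gV y = FourierTransform.fourierInv (⇑G) y from congrFun e1 y]
    rw [hG_coe, key_identity c hc_int w y]
    congr 1
    ext x
    rw [hFw]
  -- transport back to the pi type
  let g : SchwartzMap (Fin (n+1) → ℝ) ℝ :=
    (SchwartzMap.compCLMOfContinuousLinearEquiv ℝ eqv.symm gV).compCLMcod Complex.reCLM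
  have hg_apply : ∀ y : Fin (n+1) → ℝ, g y = (gV (eqv.symm y)).re := fun y => rfl
  have hmeasP : MeasurableSet {x : Fin (n+1) → ℝ | 0 < x (Fin.last n)} :=
    measurableSet_lt measurable_const (measurable_pi_apply (Fin.last n))
  have key : ∀ y : Fin (n+1) → ℝ,
      g y = ∫ x in {x : Fin (n+1) → ℝ | 0 < x (Fin.last n)}, h x * φ (x - y) := by
    intro y
    have hFreal : ∀ x : (EuclideanSpace ℝ (Fin (n+1))), c x * (φV (x - eqv.symm y) : ℂ)
        = (({x : Fin (n+1) → ℝ | 0 < x (Fin.last n)}.indicator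
            (fun x => h x * φ (x - y)) (eqv x) : ℝ) : ℂ) := by
      intro x
      by_cases hx : x ∈ S
      · have hx' : eqv x ∈ {x : Fin (n+1) → ℝ | 0 < x (Fin.last n)} := hx
        rw [Set.indicator_of_mem hx',
          show c x = (hV x : ℂ) from Set.indicator_of_mem hx _,
          show φV (x - eqv.symm y) = φ (eqv (x - eqv.symm y)) from rfl,
          map_sub, eqv.apply_symm_apply,
          show hV x = h (eqv x) from rfl]
        push_cast
        ring
      · have hx' : eqv x ∉ {x : Fin (n+1) → ℝ | 0 < x (Fin.last n)} := hx
        rw [Set.indicator_of_notMem hx',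
          show c x = (0 : ℂ) from Set.indicator_of_notMem hx _]
        simp
    rw [hg_apply, hgV]
    have hbdd : ∃ C, ∀ x : (EuclideanSpace ℝ (Fin (n+1))),
        ‖((φV (x - eqv.symm y) : ℝ) : ℂ)‖ ≤ C := by
      refine ⟨‖φV.toBoundedContinuousFunction‖, fun x => ?_⟩
      rw [Complex.norm_real]
      exact BoundedContinuousFunction.norm_coe_le_norm φV.toBoundedContinuousFunction _
    have hmeasφ : AEStronglyMeasurable
        (fun x : (EuclideanSpace ℝ (Fin (n+1))) => ((φV (x - eqv.symm y) : ℝ) : ℂ))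
        (volume : Measure (EuclideanSpace ℝ (Fin (n+1)))) := by
      exact (Complex.continuous_ofReal.comp
        (φV.continuous.comp (continuous_id.sub continuous_const))).aestronglyMeasurable
    have hint : Integrable (fun x : (EuclideanSpace ℝ (Fin (n+1))) =>
        c x * ((φV (x - eqv.symm y) : ℝ) : ℂ)) := by
      apply (hc_int.bdd_mul hmeasφ (Eventually.of_forall hbdd.choose_spec)).congr
      exact Eventually.of_forall fun x => mul_comm _ _
    have hre : (∫ x : (EuclideanSpace ℝ (Fin (n+1))), c x * ((φV (x - eqv.symm y) : ℝ) : ℂ)).re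
        = ∫ x : (EuclideanSpace ℝ (Fin (n+1))),
            {x : Fin (n+1) → ℝ | 0 < x (Fin.last n)}.indicator
              (fun x => h x * φ (x - y)) (eqv x) := by
      rw [show (∫ x : (EuclideanSpace ℝ (Fin (n+1))),
          c x * ((φV (x - eqv.symm y) : ℝ) : ℂ)).re
          = Complex.reCLM (∫ x : (EuclideanSpace ℝ (Fin (n+1))),
            c x * ((φV (x - eqv.symm y) : ℝ) : ℂ)) from rfl]
      rw [← ContinuousLinearMap.integral_comp_comm Complex.reCLM hint]
      congr 1
      ext x
      rw [show Complex.reCLM (c x * ((φV (x - eqv.symm y) : ℝ) : ℂ))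
          = (c x * ((φV (x - eqv.symm y) : ℝ) : ℂ)).re from rfl, hFreal x]
      exact Complex.ofReal_re _
    rw [hre]
    have hmp := EuclideanSpace.volume_preserving_symm_measurableEquiv_toLp (Fin (n+1))
    have hcomp := hmp.integral_comp' (f := (MeasurableEquiv.toLp 2 (Fin (n+1) → ℝ)).symm)
      ({x : Fin (n+1) → ℝ | 0 < x (Fin.last n)}.indicator (fun x => h x * φ (x - y)))
    rw [show (fun x : (EuclideanSpace ℝ (Fin (n+1))) =>
        ({x : Fin (n+1) → ℝ | 0 < x (Fin.last n)}.indicator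
          (fun x => h x * φ (x - y)) (eqv x)))
        = fun x : (EuclideanSpace ℝ (Fin (n+1))) =>
          ({x : Fin (n+1) → ℝ | 0 < x (Fin.last n)}.indicator
          (fun x => h x * φ (x - y)) ((MeasurableEquiv.toLp 2 (Fin (n+1) → ℝ)).symm x)) from rfl]
    rw [hcomp, integral_indicator hmeasP]
  refine ⟨g, key, fun hsupp => ?_⟩
  have hvanish : ∀ y : Fin (n+1) → ℝ, y (Fin.last n) ≤ 0 → g y = 0 := by
    intro y hy
    rw [key y]
    rw [MeasureTheory.setIntegral_congr_fun hmeasP (g := fun _ => (0 : ℝ)) ?_, integral_zero]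
    intro x hx
    have hxy : (x - y) (Fin.last n) > 0 := by
      simp only [Pi.sub_apply]
      have : 0 < x (Fin.last n) := hx
      linarith
    have hnot : x - y ∉ tsupport ⇑φ := by
      intro hmem
      have := hsupp hmem
      simp only [Set.mem_setOf_eq] at this
      linarith
    simp [image_eq_zero_of_notMem_tsupport hnot]
  refine ⟨hvanish, ?_⟩
  have hsub : Function.support ⇑g ⊆ {y : Fin (n+1) → ℝ | 0 ≤ y (Fin.last n)} := by
    intro y hy
    by_contra hcon
    simp only [Set.mem_setOf_eq, not_le] at hcon
    exact hy (hvanish y hcon.le)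
  have hclosed : IsClosed {y : Fin (n+1) → ℝ | 0 ≤ y (Fin.last n)} :=
    isClosed_le continuous_const (continuous_apply (Fin.last n))
  exact closure_minimal hsub hclosed
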